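/- Let α : S → T be a mapping between c-semirings with α(0) = 0 and α(1) = 1, satisfying: for all positive integers m, n and families u_{ij}, v_{ij} in S, if Σ_i Π_j α(u_{ij}) < Σ_i Π_j α(v_{ij}) in T then Σ_i Π_j u_{ij} < Σ_i Π_j v_{ij} in S. Then α preserves sums: α(u + v) = α(u) + α(v) for all u, v ∈ S. -/

import Mathlib

structure CSemiring (S : Type*) where
  add : S → S → S
  mul : S → S → S
  zero : S
  one : S
  add_comm : ∀ a b, add a b = add b a
  add_assoc : ∀ a b c, add (add a b) c = add a (add b c)
  add_idem : ∀ a, add a a = a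
  add_zero : ∀ a, add a zero = a
  add_one : ∀ a, add a one = one
  mul_comm : ∀ a b, mul a b = mul b a
  mul_assoc : ∀ a b c, mul (mul a b) c = mul a (mul b c)
  mul_one : ∀ a, mul a one = a
  mul_zero : ∀ a, mul a zero = zero
  left_distrib : ∀ a b c, mul a (add b c) = add (mul a b) (mul a c)

/-- The induced order: `a ≤ b` iff `a + b = b`. -/
def CSemiring.le {S : Type*} (C : CSemiring S) (a b : S) : Prop := C.add a b = b

/-- Induced strict order. -/
def CSemiring.lt {S : Type*} (C : CSemiring S) (a b : S) : Prop := C.le a b ∧ a ≠ b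

/-- Semiring homomorphism: preserves 0, 1, + and ×. -/
def CSemiring.isHom {S T : Type*} (C : CSemiring S) (D : CSemiring T) (α : S → T) : Prop :=
  α C.zero = D.zero ∧ α C.one = D.one ∧
  (∀ a b, α (C.add a b) = D.add (α a) (α b)) ∧
  (∀ a b, α (C.mul a b) = D.mul (α a) (α b))

/-- Product over a list (finite multiset) of elements. -/
def CSemiring.listProd {S : Type*} (C : CSemiring S) (l : List S) : S := l.foldr C.mul C.one

/-- Product of a finite family. -/
def CSemiring.finProd {S : Type*} (C : CSemiring S) {m : ℕ} (f : Fin m → S) : S :=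
  C.listProd (List.ofFn f)

/-- Sum of a finite family. -/
def CSemiring.finSum {S : Type*} (C : CSemiring S) {n : ℕ} (f : Fin n → S) : S :=
  (List.ofFn f).foldr C.add C.zero

/-- Condition (Equation 1): for all positive m,n and families u,v,
if Σᵢ Πⱼ α(uᵢⱼ) < Σᵢ Πⱼ α(vᵢⱼ) in T then Σᵢ Πⱼ uᵢⱼ < Σᵢ Πⱼ vᵢⱼ in S. -/
def CSemiring.eq1Cond {S T : Type*} (C : CSemiring S) (D : CSemiring T) (α : S → T) : Prop :=
  ∀ (m n : ℕ), 0 < m → 0 < n → ∀ (u v : Fin n → Fin m → S),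
    D.lt (D.finSum fun i => D.finProd fun j => α (u i j))
         (D.finSum fun i => D.finProd fun j => α (v i j)) →
    C.lt (C.finSum fun i => C.finProd fun j => u i j)
         (C.finSum fun i => C.finProd fun j => v i j)


lemma sum3prod1 {S : Type*} (C : CSemiring S) (x y z : S) :
    (C.finSum fun i : Fin 3 => C.finProd fun _ : Fin 1 => (![x, y, z]) i)
      = C.add x (C.add y (C.add z C.zero)) := by
  simp [CSemiring.finSum, CSemiring.finProd, CSemiring.listProd, List.ofFn_succ,
    C.mul_one]

theorem stmt9 {S T : Type*} (C : CSemiring S) (D : CSemiring T) (α : S → T)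
    (h0 : α C.zero = D.zero) (h1 : α C.one = D.one)
    (heq1 : C.eq1Cond D α) :
    ∀ u v : S, α (C.add u v) = D.add (α u) (α v) := by
  intro u v
  set A := α
  set w := C.add u v with hw
  set a := A w with ha
  set b := D.add (A u) (A v) with hb
  set c := D.add a b with hc
  -- basic C facts
  have hCw3 : C.add w (C.add w (C.add w C.zero)) = w := by
    rw [C.add_zero, C.add_idem, C.add_idem]
  have hCwuv : C.add w (C.add u (C.add v C.zero)) = w := by
    rw [C.add_zero, ← hw, C.add_idem]
  have hCuvv : C.add u (C.add v (C.add v C.zero)) = w := by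
    rw [C.add_zero, C.add_idem, ← hw]
  -- D sums
  have hDa3 : D.add a (D.add a (D.add a D.zero)) = a := by
    rw [D.add_zero, D.add_idem, D.add_idem]
  have hDc : D.add a (D.add (A u) (D.add (A v) D.zero)) = c := by
    rw [D.add_zero, ← hb, ← hc]
  have hDb : D.add (A u) (D.add (A v) (D.add (A v) D.zero)) = b := by
    rw [D.add_zero, D.add_idem, ← hb]
  have hle_ac : D.le a c := by
    show D.add a c = c
    rw [hc, ← D.add_assoc, D.add_idem]
  have hle_bc : D.le b c := by
    show D.add b c = c
    rw [hc, D.add_comm a b, ← D.add_assoc, D.add_idem, D.add_comm b a]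
  -- a = c
  have hac : a = c := by
    by_contra hne
    have hlt : D.lt (D.finSum fun i : Fin 3 => D.finProd fun _ : Fin 1 =>
        A ((fun i (_ : Fin 1) => (![w, w, w]) i) i 0))
        (D.finSum fun i : Fin 3 => D.finProd fun _ : Fin 1 =>
        A ((fun i (_ : Fin 1) => (![w, u, v]) i) i 0)) := by
      have e1 : (D.finSum fun i : Fin 3 => D.finProd fun _ : Fin 1 =>
          A ((fun i (_ : Fin 1) => (![w, w, w]) i) i 0)) = a := by
        have := sum3prod1 D (A w) (A w) (A w)
        refine Eq.trans ?_ (this.trans hDa3)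
        congr 1; funext i; fin_cases i <;> rfl
      have e2 : (D.finSum fun i : Fin 3 => D.finProd fun _ : Fin 1 =>
          A ((fun i (_ : Fin 1) => (![w, u, v]) i) i 0)) = c := by
        have := sum3prod1 D (A w) (A u) (A v)
        refine Eq.trans ?_ (this.trans hDc)
        congr 1; funext i; fin_cases i <;> rfl
      rw [e1, e2]; exact ⟨hle_ac, hne⟩
    have hClt := heq1 1 3 one_pos (by norm_num)
      (fun i (_ : Fin 1) => (![w, w, w]) i) (fun i (_ : Fin 1) => (![w, u, v]) i)
      (by convert hlt using 3)
    rcases hClt with ⟨_, hne'⟩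
    apply hne'
    have e1 := sum3prod1 C w w w
    have e2 := sum3prod1 C w u v
    calc (C.finSum fun i : Fin 3 => C.finProd fun _ : Fin 1 =>
            (fun i (_ : Fin 1) => (![w, w, w]) i) i 0)
        = w := e1.trans hCw3
      _ = (C.finSum fun i : Fin 3 => C.finProd fun _ : Fin 1 =>
            (fun i (_ : Fin 1) => (![w, u, v]) i) i 0) := (e2.trans hCwuv).symm
  -- b = c
  have hbc : b = c := by
    by_contra hne
    have hlt : D.lt (D.finSum fun i : Fin 3 => D.finProd fun _ : Fin 1 =>
        A ((fun i (_ : Fin 1) => (![u, v, v]) i) i 0))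
        (D.finSum fun i : Fin 3 => D.finProd fun _ : Fin 1 =>
        A ((fun i (_ : Fin 1) => (![w, u, v]) i) i 0)) := by
      have e1 : (D.finSum fun i : Fin 3 => D.finProd fun _ : Fin 1 =>
          A ((fun i (_ : Fin 1) => (![u, v, v]) i) i 0)) = b := by
        have := sum3prod1 D (A u) (A v) (A v)
        refine Eq.trans ?_ (this.trans hDb)
        congr 1; funext i; fin_cases i <;> rfl
      have e2 : (D.finSum fun i : Fin 3 => D.finProd fun _ : Fin 1 =>
          A ((fun i (_ : Fin 1) => (![w, u, v]) i) i 0)) = c := by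
        have := sum3prod1 D (A w) (A u) (A v)
        refine Eq.trans ?_ (this.trans hDc)
        congr 1; funext i; fin_cases i <;> rfl
      rw [e1, e2]; exact ⟨hle_bc, hne⟩
    have hClt := heq1 1 3 one_pos (by norm_num)
      (fun i (_ : Fin 1) => (![u, v, v]) i) (fun i (_ : Fin 1) => (![w, u, v]) i)
      (by convert hlt using 3)
    rcases hClt with ⟨_, hne'⟩
    apply hne'
    have e1 := sum3prod1 C u v v
    have e2 := sum3prod1 C w u v
    calc (C.finSum fun i : Fin 3 => C.finProd fun _ : Fin 1 =>
            (fun i (_ : Fin 1) => (![u, v, v]) i) i 0)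
        = w := e1.trans hCuvv
      _ = (C.finSum fun i : Fin 3 => C.finProd fun _ : Fin 1 =>
            (fun i (_ : Fin 1) => (![w, u, v]) i) i 0) := (e2.trans hCwuv).symm
  exact hac.trans hbc.symm
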